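/- For a binomially distributed random variable X ~ Bin(n, 1/n) and any bounded function g: ℕ → ℝ≥0 with g(0) = g(1) = 0 and g(k) ≤ k², the expectation E[g(X)] converges as n → ∞ to Σ_k g(k)/(k!·e), the corresponding expectation under Poisson(1). -/

import Mathlib

open Filter Real Finset

lemma sq_le_two_pow' {k : ℕ} (hk : 4 ≤ k) : k ^ 2 ≤ 2 ^ k := by
  induction k with
  | zero => omega
  | succ n ih =>
    rcases Nat.lt_or_ge n 4 with h | h
    · have h3 : 3 ≤ n := by omega
      interval_cases n
      norm_num
    · have h1 := ih (by omega)
      have h2 : 2 * n + 1 ≤ n ^ 2 := by nlinarith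
      calc (n + 1) ^ 2 = n ^ 2 + (2 * n + 1) := by ring
        _ ≤ n ^ 2 + n ^ 2 := by omega
        _ ≤ 2 ^ n + 2 ^ n := by omega
        _ = 2 ^ (n + 1) := by ring

lemma descFactorial_div_pow_tendsto (k : ℕ) :
    Tendsto (fun n : ℕ => (n.descFactorial k : ℝ) / (n : ℝ) ^ k) atTop (nhds 1) := by
  have hlim : Tendsto (fun n : ℕ => ∏ i ∈ range k, (1 - (i : ℝ) / n)) atTop
      (nhds (∏ i ∈ range k, (1 : ℝ))) := by
    apply tendsto_finset_prod
    intro i _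
    have : Tendsto (fun n : ℕ => (i : ℝ) / n) atTop (nhds 0) :=
      tendsto_const_div_atTop_nhds_zero_nat (i : ℝ)
    simpa using (tendsto_const_nhds (x := (1 : ℝ))).sub this
  rw [Finset.prod_const_one] at hlim
  apply hlim.congr'
  filter_upwards [eventually_ge_atTop k, eventually_gt_atTop 0] with n hn hn0
  have hn0' : (n : ℝ) ≠ 0 := Nat.cast_ne_zero.2 hn0.ne'
  rw [Nat.descFactorial_eq_prod_range, Nat.cast_prod]
  have hcast : ∀ i ∈ range k, ((n - i : ℕ) : ℝ) = (n : ℝ) - i := by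
    intro i hi
    exact Nat.cast_sub (le_trans (mem_range.1 hi).le hn)
  rw [Finset.prod_congr rfl hcast]
  have hpow : (n : ℝ) ^ k = ∏ _i ∈ range k, (n : ℝ) := by
    rw [Finset.prod_const, Finset.card_range]
  rw [hpow, ← Finset.prod_div_distrib]
  apply Finset.prod_congr rfl
  intro i _
  field_simp

lemma choose_mul_pow_tendsto (k : ℕ) :
    Tendsto (fun n : ℕ => (n.choose k : ℝ) * (1 / n) ^ k) atTop
      (nhds (1 / (Nat.factorial k : ℝ))) := by
  have hk : (Nat.factorial k : ℝ) ≠ 0 := Nat.cast_ne_zero.2 (Nat.factorial_ne_zero k)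
  have h := (descFactorial_div_pow_tendsto k).mul_const (1 / (Nat.factorial k : ℝ))
  rw [one_mul] at h
  apply h.congr'
  filter_upwards [eventually_gt_atTop 0] with n hn0
  have hn0' : (n : ℝ) ≠ 0 := Nat.cast_ne_zero.2 hn0.ne'
  have hd : (n.descFactorial k : ℝ) = (Nat.factorial k : ℝ) * (n.choose k : ℝ) := by
    rw_mod_cast [Nat.descFactorial_eq_factorial_mul_choose]
  rw [hd]
  field_simp
  rw [mul_assoc, ← mul_pow, mul_one_div_cancel hn0', one_pow, mul_one]

lemma term_tendsto (k : ℕ) :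
    Tendsto (fun n : ℕ => (n.choose k : ℝ) * (1 / n) ^ k * (1 - 1 / n) ^ (n - k))
      atTop (nhds (1 / (Nat.factorial k * Real.exp 1))) := by
  have hB1 : Tendsto (fun n : ℕ => (1 - 1 / (n : ℝ)) ^ n) atTop (nhds (Real.exp (-1))) := by
    have := Real.tendsto_one_add_div_pow_exp (-1)
    apply this.congr
    intro n
    norm_num [sub_eq_add_neg, neg_div]
  have hone : Tendsto (fun n : ℕ => 1 - 1 / (n : ℝ)) atTop (nhds 1) := by
    have : Tendsto (fun n : ℕ => (1 : ℝ) / n) atTop (nhds 0) :=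
      tendsto_const_div_atTop_nhds_zero_nat 1
    simpa using (tendsto_const_nhds (x := (1 : ℝ))).sub this
  have hB2 : Tendsto (fun n : ℕ => (1 - 1 / (n : ℝ)) ^ k) atTop (nhds 1) := by
    simpa using hone.pow k
  have hB : Tendsto (fun n : ℕ => (1 - 1 / (n : ℝ)) ^ (n - k)) atTop (nhds (Real.exp (-1))) := by
    have h := hB1.div hB2 one_ne_zero
    rw [div_one] at h
    apply h.congr'
    filter_upwards [eventually_ge_atTop (k + 2)] with n hn
    have hn2 : (2 : ℕ) ≤ n := by omega
    have hne : (1 : ℝ) - 1 / n ≠ 0 := by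
      have : (1 : ℝ) / n ≤ 1 / 2 := by
        apply div_le_div_of_nonneg_left one_pos.le two_pos
        exact_mod_cast hn2
      intro h0
      rw [sub_eq_zero] at h0
      rw [← h0] at this
      norm_num at this
    simp only [Pi.div_apply]
    rw [pow_sub₀ _ hne (show k ≤ n by omega)]
    exact (div_eq_mul_inv _ _).symm
  have h := (choose_mul_pow_tendsto k).mul hB
  convert h using 2
  rw [Real.exp_neg, one_div, one_div, mul_inv]

/-- Poisson approximation of the binomial: for X ~ Bin(n, 1/n) and any nonnegative
g : ℕ → ℝ with g(0) = g(1) = 0 and g(k) ≤ k², the expectation E[g(X)] converges as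
n → ∞ to the Poisson(1) expectation Σ_k g(k)/(k!·e). -/
theorem stmt14 (g : ℕ → ℝ) (h0 : g 0 = 0) (h1 : g 1 = 0)
    (hnn : ∀ k, 0 ≤ g k) (hb : ∀ k, g k ≤ (k : ℝ) ^ 2) :
    Filter.Tendsto
      (fun n : ℕ => ∑ k ∈ Finset.range (n + 1),
        (n.choose k : ℝ) * (1 / n) ^ k * (1 - 1 / n) ^ (n - k) * g k)
      Filter.atTop
      (nhds (∑' k : ℕ, g k / (Nat.factorial k * Real.exp 1))) := by
  set f : ℕ → ℕ → ℝ := fun n k =>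
    (n.choose k : ℝ) * (1 / n) ^ k * (1 - 1 / n) ^ (n - k) * g k with hf
  have key : ∀ n, (∑' k : ℕ, f n k) = ∑ k ∈ Finset.range (n + 1), f n k := by
    intro n
    apply tsum_eq_sum
    intro k hk
    have hnk : n < k := by simpa using Finset.mem_range.not.1 hk
    simp [hf, Nat.choose_eq_zero_of_lt hnk]
  have hsum : Summable (fun k : ℕ => (k : ℝ) ^ 2 / Nat.factorial k) := by
    apply Summable.of_norm_bounded_eventually_nat (g := fun k => (2 : ℝ) ^ k / Nat.factorial k)
      (Real.summable_pow_div_factorial 2)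
    filter_upwards [eventually_ge_atTop 4] with k hk
    rw [Real.norm_eq_abs, abs_of_nonneg (by positivity)]
    apply div_le_div_of_nonneg_right _ (by positivity)
    · exact_mod_cast sq_le_two_pow' hk
  have hab : ∀ k, Tendsto (fun n => f n k) atTop
      (nhds (g k / (Nat.factorial k * Real.exp 1))) := by
    intro k
    have h := (term_tendsto k).mul_const (g k)
    have heq : 1 / ((Nat.factorial k : ℝ) * Real.exp 1) * g k
        = g k / ((Nat.factorial k : ℝ) * Real.exp 1) := by ring
    rwa [heq] at h
  have hbound : ∀ᶠ n : ℕ in atTop, ∀ k, ‖f n k‖ ≤ (k : ℝ) ^ 2 / Nat.factorial k := by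
    filter_upwards [eventually_ge_atTop 1] with n hn
    intro k
    have hn0' : (n : ℝ) ≠ 0 := Nat.cast_ne_zero.2 (by omega)
    have hn1 : (1 : ℝ) ≤ n := by exact_mod_cast hn
    have hsub : (0 : ℝ) ≤ 1 - 1 / n := by
      have : (1 : ℝ) / n ≤ 1 := by
        rw [div_le_one (by linarith)]; exact hn1
      linarith
    have hfnn : 0 ≤ f n k := by
      apply mul_nonneg _ (hnn k)
      apply mul_nonneg (mul_nonneg (by positivity) (by positivity)) (pow_nonneg hsub _)
    rw [Real.norm_eq_abs, abs_of_nonneg hfnn]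
    have h1 : (n.choose k : ℝ) * (1 / n) ^ k ≤ 1 / Nat.factorial k := by
      have hc : (n.choose k : ℝ) ≤ (n : ℝ) ^ k / Nat.factorial k := by
        exact_mod_cast Nat.choose_le_pow_div k n (α := ℝ)
      calc (n.choose k : ℝ) * (1 / n) ^ k
          ≤ ((n : ℝ) ^ k / Nat.factorial k) * (1 / n) ^ k :=
            mul_le_mul_of_nonneg_right hc (by positivity)
        _ = 1 / Nat.factorial k := by
            rw [div_mul_eq_mul_div, ← mul_pow, mul_one_div_cancel hn0', one_pow]
    have h2 : (1 - 1 / (n : ℝ)) ^ (n - k) ≤ 1 := pow_le_one₀ hsub (by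
      have : (0 : ℝ) ≤ 1 / n := by positivity
      linarith)
    calc f n k = ((n.choose k : ℝ) * (1 / n) ^ k) * ((1 - 1 / n) ^ (n - k) * g k) := by
          rw [hf]; ring
      _ ≤ (1 / Nat.factorial k) * (1 * (k : ℝ) ^ 2) := by
          apply mul_le_mul h1 (mul_le_mul h2 (hb k) (hnn k) one_pos.le)
          · exact mul_nonneg (pow_nonneg hsub _) (hnn k)
          · positivity
      _ = (k : ℝ) ^ 2 / Nat.factorial k := by ring
  have := tendsto_tsum_of_dominated_convergence hsum hab hbound
  apply this.congr
  intro n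
  exact key n
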